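/- Let P have length m and T have length n ≤ 3m/2, let k ∈ [0,m], and suppose both T[0..m) and T[n−m..n) are k-mismatch occurrences of P. If there is a positive integer d ≥ 2k and a primitive string Q with |Q| ≤ m/(8d) and δ_H(P,Q*) ≤ d, then every position ℓ ∈ Occ^H_k(P,T) is a multiple of |Q|. -/

import Mathlib

open List

variable {α : Type*}

/-- The fragment S[i..j) of a string (list) S. -/
def frag (S : List α) (i j : ℕ) : List α := (S.drop i).take (j - i)

/-- Q^∞[a..b): the fragment of the infinite repetition of Q from a (incl.) to b (excl.). -/
def repPrefix [Inhabited α] (Q : List α) (a b : ℕ) : List α :=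
  (List.range' a (b - a)).map (fun i => Q.getD (i % Q.length) default)

/-- Hamming distance of two strings of the same length (counted over positions of S). -/
def hamming [DecidableEq α] [Inhabited α] (S T : List α) : ℕ :=
  ((Finset.range S.length).filter
    (fun i => S.getD i default ≠ T.getD i default)).card

/-- δ_H(S, Q*): Hamming distance of S to the length-|S| prefix of Q^∞. -/
def hammingStar [DecidableEq α] [Inhabited α] (S Q : List α) : ℕ :=
  hamming S (repPrefix Q 0 S.length)

/-- Cost structure for Levenshtein distance (formerly in Mathlib, `Mathlib.Data.List.EditDistance.Defs`). -/
structure Levenshtein.Cost (α β δ : Type*) where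
  delete : α → δ
  insert : β → δ
  substitute : α → β → δ

/-- Unit costs (formerly Mathlib's `Levenshtein.defaultCost`). -/
def Levenshtein.defaultCost [DecidableEq α] : Levenshtein.Cost α α ℕ where
  delete _ := 1
  insert _ := 1
  substitute a b := if a = b then 0 else 1

/-- Formerly Mathlib's `Levenshtein.impl`. -/
def Levenshtein.impl {β δ : Type*} [AddZeroClass δ] [Min δ] (C : Levenshtein.Cost α β δ)
    (xs : List α) (y : β) (d : {r : List δ // 0 < r.length}) : {r : List δ // 0 < r.length} :=
  let ⟨ds, w⟩ := d
  xs.zip (ds.zip ds.tail) |>.foldr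
    (init := ⟨[ds.getLast (List.length_pos_iff.mp w) + C.insert y], by simp⟩)
    (fun ⟨x, d₀, d₁⟩ ⟨r, w⟩ =>
      ⟨min (C.delete x + r[0]) (min (C.insert y + d₀) (C.substitute x y + d₁)) :: r, by simp⟩)

/-- Formerly Mathlib's `suffixLevenshtein`. -/
def suffixLevenshtein {β δ : Type*} [AddZeroClass δ] [Min δ] (C : Levenshtein.Cost α β δ)
    (xs : List α) (ys : List β) : {r : List δ // 0 < r.length} :=
  ys.foldr
    (Levenshtein.impl C xs)
    (xs.foldr (init := ⟨[0], by simp⟩) (fun a ⟨r, w⟩ => ⟨(C.delete a + r[0]) :: r, by simp⟩))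

/-- Formerly Mathlib's `levenshtein`. -/
def levenshtein {β δ : Type*} [AddZeroClass δ] [Min δ] (C : Levenshtein.Cost α β δ)
    (xs : List α) (ys : List β) : δ :=
  let ⟨r, w⟩ := suffixLevenshtein C xs ys
  r[0]

/-- Edit (Levenshtein) distance. -/
def editDist [DecidableEq α] (S T : List α) : ℕ :=
  levenshtein Levenshtein.defaultCost S T

/-- A string is primitive if it is nonempty and not a proper power of a string. -/
def Primitive (Q : List α) : Prop :=
  Q ≠ [] ∧ ∀ (U : List α) (t : ℕ), 2 ≤ t → Q ≠ (List.replicate t U).flatten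

/-- p is a period of S. -/
def IsPeriod [Inhabited α] (p : ℕ) (S : List α) : Prop :=
  0 < p ∧ ∀ i, i + p < S.length → S.getD i default = S.getD (i + p) default

/-- per(S): the smallest period of S. -/
noncomputable def per [Inhabited α] (S : List α) : ℕ := sInf {p | IsPeriod p S}

/-- Occ^H_k(P,T): starting positions of k-mismatch occurrences of P in T. -/
def occH [DecidableEq α] [Inhabited α] (k : ℕ) (P T : List α) : Finset ℕ :=
  (Finset.range (T.length - P.length + 1)).filter
    (fun i => hamming P (frag T i (i + P.length)) ≤ k)

/-- Exact occurrences of B in T. -/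
def occExact [DecidableEq α] (B T : List α) : Finset ℕ :=
  (Finset.range (T.length + 1)).filter (fun i => frag T i (i + B.length) = B)

/-- Occ^E_k(P,T): starting positions of k-error (edit distance) occurrences of P in T. -/
def occE [DecidableEq α] (k : ℕ) (P T : List α) : Set ℕ :=
  {i | ∃ j, i ≤ j ∧ j ≤ T.length ∧ editDist P (frag T i j) ≤ k}

/-- δ_E^cyc(S,Q): minimum edit distance of S to any substring of Q^∞. -/
noncomputable def edCyc [DecidableEq α] [Inhabited α] (S Q : List α) : ℕ :=
  sInf {d | ∃ i j, i ≤ j ∧ d = editDist S (repPrefix Q i j)}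

/-- δ_E(S,Q*): minimum edit distance of S to a prefix of Q^∞. -/
noncomputable def edStar [DecidableEq α] [Inhabited α] (S Q : List α) : ℕ :=
  sInf {d | ∃ j, d = editDist S (repPrefix Q 0 j)}

/-- Minimum edit distance of T to a substring of Q^∞ starting at position x. -/
noncomputable def edStarAt [DecidableEq α] [Inhabited α] (T Q : List α) (x : ℕ) : ℕ :=
  sInf {d | ∃ j, x ≤ j ∧ d = editDist T (repPrefix Q x j)}

/-- Minimum edit distance of T to a substring of Q^∞ ending at a position ≡ y (mod |Q|). -/
noncomputable def edEndAt [DecidableEq α] [Inhabited α] (T Q : List α) (y : ℕ) : ℕ :=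
  sInf {d | ∃ i j, i ≤ j ∧ j % Q.length = y % Q.length ∧ d = editDist T (repPrefix Q i j)}

/-- Minimum edit distance of L to a substring of Q^∞ ending at a multiple of |Q|. -/
noncomputable def edEndMul [DecidableEq α] [Inhabited α] (L Q : List α) : ℕ :=
  sInf {d | ∃ i j, i ≤ j * Q.length ∧ d = editDist L (repPrefix Q i (j * Q.length))}

/-- The fragment S[i..j) of S is locked with respect to Q. -/
def Locked [DecidableEq α] [Inhabited α] (S Q : List α) (i j : ℕ) : Prop :=
  (∃ a : ℕ, edCyc (frag S i j) Q = editDist (frag S i j) (repPrefix Q 0 (a * Q.length))) ∨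
  (j = S.length ∧ edCyc (frag S i j) Q = edStar (frag S i j) Q) ∨
  (i = 0 ∧ edCyc (frag S i j) Q = edEndMul (frag S i j) Q) ∨
  (i = 0 ∧ j = S.length)

/-- rot^j(Q): rotation moving the last j (mod |Q|) characters to the front. -/
def rotR (Q : List α) (j : ℕ) : List α := Q.rotate (Q.length - j % Q.length)

/-- |Mis(T,Q*) ∩ [a,b)|. -/
def misCount [DecidableEq α] [Inhabited α] (T Q : List α) (a b : ℕ) : ℕ :=
  ((Finset.Ico a b).filter (fun i => i < T.length ∧
     T.getD i default ≠ Q.getD (i % Q.length) default)).card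

/-- μ_j: the total weight of aligned mismatch pairs of P and T against Q^∞ at shift j·|Q|:
a pair (τ = j|Q|+π, π) with π ∈ Mis(P,Q*), τ ∈ Mis(T,Q*) has weight 2 − δ_H(P[π],T[τ]). -/
def mu [DecidableEq α] [Inhabited α] (P T Q : List α) (j : ℕ) : ℕ :=
  ∑ π ∈ Finset.range P.length,
    if P.getD π default ≠ Q.getD (π % Q.length) default ∧
       j * Q.length + π < T.length ∧
       T.getD (j * Q.length + π) default ≠ Q.getD ((j * Q.length + π) % Q.length) default
    then (if P.getD π default = T.getD (j * Q.length + π) default then 2 else 1)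
    else 0

/-- Commuting words are powers of a common word (Lyndon–Schützenberger). -/
lemma aux_comm_pow : ∀ (N : ℕ) (A B : List α), A.length + B.length ≤ N → A ++ B = B ++ A →
    ∃ (U : List α) (i j : ℕ),
      A = (List.replicate i U).flatten ∧ B = (List.replicate j U).flatten := by
  intro N
  induction N with
  | zero =>
    intro A B hlen _
    have hA : A = [] := List.eq_nil_of_length_eq_zero (by omega)
    have hB : B = [] := List.eq_nil_of_length_eq_zero (by omega)
    exact ⟨[], 0, 0, by simp [hA], by simp [hB]⟩
  | succ N ih =>
    intro A B hlen hcomm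
    rcases eq_or_ne A [] with rfl | hA
    · exact ⟨B, 0, 1, by simp, by simp⟩
    rcases eq_or_ne B [] with rfl | hB
    · exact ⟨A, 1, 0, by simp, by simp⟩
    have hA1 : 1 ≤ A.length := List.length_pos_iff.mpr hA
    have hB1 : 1 ≤ B.length := List.length_pos_iff.mpr hB
    rcases le_or_gt A.length B.length with h | h
    · have hApre : A = B.take A.length := by
        have h1 := congrArg (List.take A.length) hcomm
        rwa [List.take_left, List.take_append,
          Nat.sub_eq_zero_of_le h, List.take_zero, List.append_nil] at h1
      have hBeq : B = A ++ B.drop A.length := by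
        conv_lhs => rw [← List.take_append_drop A.length B, ← hApre]
      set C := B.drop A.length with hC
      have hAC : A ++ C = C ++ A := by
        have h2 : A ++ (A ++ C) = (A ++ C) ++ A := by rw [← hBeq]; exact hcomm
        exact List.append_cancel_left (h2.trans (List.append_assoc A C A))
      have hlen' : A.length + C.length ≤ N := by
        have : C.length = B.length - A.length := by rw [hC, List.length_drop]
        omega
      obtain ⟨U, i, j, hU1, hU2⟩ := ih A C hlen' hAC
      refine ⟨U, i, i + j, hU1, ?_⟩
      rw [hBeq, hU1, hU2, List.replicate_add, List.flatten_append]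
    · have hBpre : B = A.take B.length := by
        have h1 := congrArg (List.take B.length) hcomm.symm
        rwa [List.take_left, List.take_append,
          Nat.sub_eq_zero_of_le (le_of_lt h), List.take_zero, List.append_nil] at h1
      have hAeq : A = B ++ A.drop B.length := by
        conv_lhs => rw [← List.take_append_drop B.length A, ← hBpre]
      set D := A.drop B.length with hD
      have hBD : B ++ D = D ++ B := by
        have h2 : B ++ (B ++ D) = (B ++ D) ++ B := by rw [← hAeq]; exact hcomm.symm
        exact List.append_cancel_left (h2.trans (List.append_assoc B D B))
      have hlen' : B.length + D.length ≤ N := by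
        have : D.length = A.length - B.length := by rw [hD, List.length_drop]
        omega
      obtain ⟨U, i, j, hU1, hU2⟩ := ih B D hlen' hBD
      refine ⟨U, i + j, i, ?_, hU1⟩
      rw [hAeq, hU1, hU2, List.replicate_add, List.flatten_append]

/-- A primitive word is not fixed by a nontrivial rotation. -/
lemma aux_primitive_rotate {Q : List α} (hQ : Primitive Q) {r : ℕ}
    (h0 : 0 < r) (hlt : r < Q.length) : Q.rotate r ≠ Q := by
  intro hrot
  rw [List.rotate_eq_drop_append_take (le_of_lt hlt)] at hrot
  set A := Q.take r with hA
  set B := Q.drop r with hB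
  have hQeq : A ++ B = Q := List.take_append_drop r Q
  have hcomm : A ++ B = B ++ A := by rw [hQeq, hrot]
  obtain ⟨U, i, j, h1, h2⟩ := aux_comm_pow (A.length + B.length) A B le_rfl hcomm
  have hAne : A ≠ [] := by
    apply List.ne_nil_of_length_pos
    rw [hA, List.length_take]; omega
  have hBne : B ≠ [] := by
    apply List.ne_nil_of_length_pos
    rw [hB, List.length_drop]; omega
  have hi : i ≠ 0 := by rintro rfl; simp at h1; exact hAne h1
  have hj : j ≠ 0 := by rintro rfl; simp at h2; exact hBne h2
  refine hQ.2 U (i + j) (by omega) ?_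
  rw [← hQeq, h1, h2, List.replicate_add, List.flatten_append]

/-- in the periodic case, every k-mismatch occurrence starts at a multiple of |Q|. -/
theorem periodic_occ_multiple {α : Type*} [DecidableEq α] [Inhabited α]
    (P T Q : List α) (m n k d : ℕ)
    (hP : P.length = m) (hT : T.length = n)
    (hmn : m ≤ n) (hn : 2 * n ≤ 3 * m) (hk : k ≤ m)
    (hpre : hamming P (frag T 0 m) ≤ k) (hsuf : hamming P (frag T (n - m) n) ≤ k)
    (hd0 : 0 < d) (hd : 2 * k ≤ d)
    (hQ : Primitive Q) (hQlen : 8 * d * Q.length ≤ m)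
    (hPQ : hammingStar P Q ≤ d) :
    ∀ ℓ ∈ occH k P T, Q.length ∣ ℓ := by
  intro ℓ hℓ
  set q := Q.length with hq
  have hq0 : 0 < q := List.length_pos_iff.mpr hQ.1
  -- unpack occurrence
  rw [occH, Finset.mem_filter, Finset.mem_range] at hℓ
  obtain ⟨hℓrange, hℓocc⟩ := hℓ
  rw [hP, hT] at hℓrange
  have hℓnm : ℓ ≤ n - m := by omega
  have hℓm : ℓ + m ≤ n := by omega
  have h2ℓ : 2 * ℓ ≤ m := by omega
  have hm4 : 4 * d * q + ℓ ≤ m := by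
    have hh : 2 * (4 * d * q) = 8 * d * q := by ring
    linarith [hQlen, h2ℓ, hh]
  -- the periodic extension of Q
  set f : ℕ → α := fun i => Q.getD (i % q) default with hf
  -- getD facts
  have hTlen : T.length = n := hT
  have hgetT : ∀ i (_ : i < n), T.getD i default = T[i]'(by omega) := fun i hi =>
    List.getD_eq_getElem _ _ (by omega)
  have hfrag1 : ∀ i, i < m → (frag T 0 m).getD i default = T.getD i default := by
    intro i hi
    have hlt : i < (frag T 0 m).length := by
      simp only [frag, List.length_take, List.length_drop, hTlen]; omega
    rw [List.getD_eq_getElem _ _ hlt, hgetT i (by omega)]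
    simp only [frag, List.getElem_take, List.drop_zero]
  have hfrag2 : ∀ i, i < m → (frag T ℓ (ℓ + m)).getD i default = T.getD (ℓ + i) default := by
    intro i hi
    have hlt : i < (frag T ℓ (ℓ + m)).length := by
      simp only [frag, List.length_take, List.length_drop, hTlen]; omega
    rw [List.getD_eq_getElem _ _ hlt, hgetT (ℓ + i) (by omega)]
    simp only [frag, List.getElem_take]
    rw [List.getElem_drop]
  have hreplen : (repPrefix Q 0 m).length = m := by
    simp [repPrefix]
  have hrep : ∀ i, i < m → (repPrefix Q 0 m).getD i default = f i := by
    intro i hi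
    rw [List.getD_eq_getElem _ _ (by omega)]
    simp [repPrefix, f, q]
  -- bound on mismatches of T[0..m) against Q^∞
  have hS1 : ((Finset.range m).filter (fun j => T.getD j default ≠ f j)).card ≤ k + d := by
    have hsub : (Finset.range m).filter (fun j => T.getD j default ≠ f j) ⊆
        ((Finset.range m).filter (fun j => P.getD j default ≠ T.getD j default)) ∪
        ((Finset.range m).filter (fun j => P.getD j default ≠ f j)) := by
      intro j hj
      rw [Finset.mem_filter] at hj
      rw [Finset.mem_union, Finset.mem_filter, Finset.mem_filter]
      by_contra hcon
      push_neg at hcon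
      obtain ⟨c1, c2⟩ := hcon
      exact hj.2 ((c1 hj.1).symm.trans (c2 hj.1))
    refine le_trans (Finset.card_le_card hsub) (le_trans (Finset.card_union_le _ _) ?_)
    have e1 : ((Finset.range m).filter (fun j => P.getD j default ≠ T.getD j default)).card
        = hamming P (frag T 0 m) := by
      rw [hamming, hP]
      congr 1
      apply Finset.filter_congr
      intro j hj
      rw [Finset.mem_range] at hj
      rw [hfrag1 j hj]
    have e2 : ((Finset.range m).filter (fun j => P.getD j default ≠ f j)).card
        = hammingStar P Q := by
      rw [hammingStar, hamming, hP]
      congr 1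
      apply Finset.filter_congr
      intro j hj
      rw [Finset.mem_range] at hj
      rw [hrep j hj]
    rw [e1, e2]
    exact add_le_add hpre hPQ
  -- bound on mismatches of T[ℓ..ℓ+m) against Q^∞ (phase 0)
  have hS2 : ((Finset.range m).filter (fun i => T.getD (ℓ + i) default ≠ f i)).card ≤ k + d := by
    have hsub : (Finset.range m).filter (fun i => T.getD (ℓ + i) default ≠ f i) ⊆
        ((Finset.range m).filter (fun i => P.getD i default ≠ T.getD (ℓ + i) default)) ∪
        ((Finset.range m).filter (fun i => P.getD i default ≠ f i)) := by
      intro i hi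
      rw [Finset.mem_filter] at hi
      rw [Finset.mem_union, Finset.mem_filter, Finset.mem_filter]
      by_contra hcon
      push_neg at hcon
      obtain ⟨c1, c2⟩ := hcon
      exact hi.2 ((c1 hi.1).symm.trans (c2 hi.1))
    refine le_trans (Finset.card_le_card hsub) (le_trans (Finset.card_union_le _ _) ?_)
    have e1 : ((Finset.range m).filter (fun i => P.getD i default ≠ T.getD (ℓ + i) default)).card
        = hamming P (frag T ℓ (ℓ + m)) := by
      rw [hamming, hP]
      congr 1
      apply Finset.filter_congr
      intro i hi
      rw [Finset.mem_range] at hi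
      rw [hfrag2 i hi]
    have e2 : ((Finset.range m).filter (fun i => P.getD i default ≠ f i)).card
        = hammingStar P Q := by
      rw [hammingStar, hamming, hP]
      congr 1
      apply Finset.filter_congr
      intro i hi
      rw [Finset.mem_range] at hi
      rw [hrep i hi]
    rw [e1, e2]
    have hℓocc' : hamming P (frag T ℓ (ℓ + P.length)) ≤ k := hℓocc
    rw [hP] at hℓocc'
    exact add_le_add hℓocc' hPQ
  -- the set of self-mismatches of Q^∞ under shift ℓ
  set M := (Finset.range (m - ℓ)).filter (fun i => f (ℓ + i) ≠ f i) with hM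
  have hMle : M.card ≤ 2 * k + 2 * d := by
    have hsub : M ⊆
        ((Finset.range (m - ℓ)).filter (fun i => T.getD (ℓ + i) default ≠ f (ℓ + i))) ∪
        ((Finset.range (m - ℓ)).filter (fun i => T.getD (ℓ + i) default ≠ f i)) := by
      intro i hi
      rw [hM, Finset.mem_filter] at hi
      rw [Finset.mem_union, Finset.mem_filter, Finset.mem_filter]
      by_contra hcon
      push_neg at hcon
      obtain ⟨c1, c2⟩ := hcon
      exact hi.2 ((c1 hi.1).symm.trans (c2 hi.1))
    refine le_trans (Finset.card_le_card hsub) (le_trans (Finset.card_union_le _ _) ?_)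
    have b1 : ((Finset.range (m - ℓ)).filter
        (fun i => T.getD (ℓ + i) default ≠ f (ℓ + i))).card ≤ k + d := by
      refine le_trans (Finset.card_le_card_of_injOn (fun i => ℓ + i) ?_ ?_) hS1
      · intro i hi
        rw [Finset.mem_coe, Finset.mem_filter, Finset.mem_range] at hi
        obtain ⟨hi1, hi2⟩ := hi
        rw [Finset.mem_coe, Finset.mem_filter, Finset.mem_range]
        refine ⟨show ℓ + i < m by omega, ?_⟩
        show T.getD (ℓ + i) default ≠ f (ℓ + i)
        exact hi2
      · intro a _ b _ hab
        simp only [] at hab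
        omega
    have b2 : ((Finset.range (m - ℓ)).filter
        (fun i => T.getD (ℓ + i) default ≠ f i)).card ≤ k + d := by
      refine le_trans (Finset.card_le_card ?_) hS2
      intro i hi
      rw [Finset.mem_filter, Finset.mem_range] at hi
      obtain ⟨hi1, hi2⟩ := hi
      rw [Finset.mem_filter, Finset.mem_range]
      exact ⟨by omega, hi2⟩
    omega
  -- now suppose q does not divide ℓ
  by_contra hdvd
  set r := ℓ % q with hr
  have hr0 : 0 < r :=
    Nat.pos_of_ne_zero (fun h => hdvd (Nat.dvd_of_mod_eq_zero (hr.symm.trans h)))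
  have hrq : r < q := Nat.mod_lt _ hq0
  -- mismatch witness from primitivity
  have hrot : Q.rotate r ≠ Q := aux_primitive_rotate hQ hr0 hrq
  have hwit : ∃ t, t < q ∧ Q.getD ((t + r) % q) default ≠ Q.getD t default := by
    by_contra hcon
    push_neg at hcon
    apply hrot
    apply List.ext_getElem (by rw [List.length_rotate])
    intro t h1 h2
    have h2q : t < q := h2
    have h3 := hcon t h2q
    rw [List.getD_eq_getElem _ _ (Nat.mod_lt _ hq0),
        List.getD_eq_getElem _ _ h2q] at h3
    rw [List.getElem_rotate]
    exact h3
  obtain ⟨t, htq, ht⟩ := hwit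
  -- each block contributes a mismatch
  have hblocks : ∀ b, b < 4 * d → b * q + t ∈ M := by
    intro b hb
    rw [hM, Finset.mem_filter, Finset.mem_range]
    constructor
    · have hlt : b * q + t < 4 * d * q := by
        calc b * q + t < b * q + q := by omega
        _ = (b + 1) * q := by ring
        _ ≤ 4 * d * q := Nat.mul_le_mul_right q (by omega)
      exact lt_of_lt_of_le hlt (Nat.le_sub_of_add_le hm4)
    · have e1 : (ℓ + (b * q + t)) % q = (t + r) % q := by
        have h4 : ℓ + (b * q + t) = (t + ℓ) + b * q := by ring
        rw [h4, Nat.add_mul_mod_self_right, Nat.add_mod, Nat.mod_eq_of_lt htq, ← hr]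
      have e2 : (b * q + t) % q = t := by
        rw [Nat.add_comm, Nat.add_mul_mod_self_right, Nat.mod_eq_of_lt htq]
      simp only [hf]
      rw [e1, e2]
      exact ht
  -- count: 4d ≤ |M|
  have hcount : 4 * d ≤ M.card := by
    have := Finset.card_le_card_of_injOn (fun b => b * q + t)
      (fun b hb => hblocks b (Finset.mem_range.mp hb))
      (by
        intro a _ b _ hab
        simp only at hab
        exact Nat.eq_of_mul_eq_mul_right hq0 (Nat.add_right_cancel hab))
    simpa using this
  omega
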